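/- Let Ω ⊆ ℂ be a domain, A an n×n complex matrix with σ(A) ⊂ Ω, and f ∈ O(Ω) non-constant. If the minimal polynomial of A is ∏_{λ ∈ σ(A)} (t - λ)^{m(λ)}, then the minimal polynomial of f(A) (defined via the holomorphic functional calculus) is ∏_{ν ∈ f(σ(A))} (t - ν)^{k(ν)}, where k(ν) = max{ ⌊(m(λ)-1)/(ord_λ f' + 1)⌋ + 1 : λ ∈ σ(A) ∩ f^{-1}{ν} }. -/

import Mathlib

open Polynomial

private lemma rootMult_pow_aux (a : ℂ) (p : ℂ[X]) (hp : p ≠ 0) (k : ℕ) :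
    (p ^ k).rootMultiplicity a = k * p.rootMultiplicity a := by
  induction k with
  | zero => rw [pow_zero, zero_mul, ← C_1, rootMultiplicity_C]
  | succ k ih =>
    rw [pow_succ, rootMultiplicity_mul (mul_ne_zero (pow_ne_zero _ hp) hp), ih]
    ring

private lemma prod_pow_dvd_aux (s : Finset ℂ) (e : ℂ → ℕ) (g : ℂ[X])
    (h : ∀ x ∈ s, (X - C x) ^ e x ∣ g) :
    (∏ x ∈ s, (X - C x) ^ e x) ∣ g := by
  refine Finset.prod_dvd_of_coprime ?_ h
  intro a _ b _ hab
  exact (pairwise_coprime_X_sub_C (Function.injective_id) hab).pow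

private lemma rootMult_comp_aux (q P : ℂ[X]) (hq : q ≠ 0) (hP : P.natDegree ≠ 0) (lam : ℂ) :
    (q.comp P).rootMultiplicity lam
      = q.rootMultiplicity (P.eval lam) * (P - C (P.eval lam)).rootMultiplicity lam := by
  set c := P.eval lam with hc
  set a := q.rootMultiplicity c with ha
  set h := q /ₘ (X - C c) ^ a with hh
  have hfact : (X - C c) ^ a * h = q := pow_mul_divByMonic_rootMultiplicity_eq q c
  have hhc : h.eval c ≠ 0 := eval_divByMonic_pow_rootMultiplicity_ne_zero c hq
  have hgne : P - C c ≠ 0 := by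
    intro h0
    rw [sub_eq_zero] at h0
    exact hP (by rw [h0]; exact natDegree_C _)
  have hcompne : h.comp P ≠ 0 := by
    intro h0
    have := congrArg (eval lam) h0
    rw [eval_comp] at this
    exact hhc (by simpa [← hc] using this)
  have hnr : ¬ (h.comp P).IsRoot lam := by
    intro h0
    rw [IsRoot, eval_comp, ← hc] at h0
    exact hhc h0
  calc (q.comp P).rootMultiplicity lam
      = (((X - C c) ^ a * h).comp P).rootMultiplicity lam := by rw [hfact]
    _ = (((P - C c)) ^ a * h.comp P).rootMultiplicity lam := by
        rw [mul_comp, pow_comp, sub_comp, X_comp, C_comp]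
    _ = ((P - C c) ^ a).rootMultiplicity lam + (h.comp P).rootMultiplicity lam :=
        rootMultiplicity_mul (mul_ne_zero (pow_ne_zero _ hgne) hcompne)
    _ = a * (P - C c).rootMultiplicity lam := by
        rw [rootMult_pow_aux _ _ hgne, rootMultiplicity_eq_zero hnr, add_zero]

/-- minimal polynomial of `f(A)` under the holomorphic functional
calculus.  Here `m λ` is the multiplicity of `λ` in the minimal polynomial of
`A`, `ord λ` is the order of vanishing of `f'` at `λ` (specified by the
hypothesis `hord`), and `f(A)` is realized as `P(A)` for any polynomial `P`
whose derivatives match those of `f` at each eigenvalue up to order `m λ - 1`. -/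
theorem minpoly_holomorphic_functional_calculus
    (Ω : Set ℂ) (hΩo : IsOpen Ω) (hΩc : IsConnected Ω)
    {n : ℕ} (hn : 2 ≤ n) (A : Matrix (Fin n) (Fin n) ℂ)
    (hspec : spectrum ℂ A ⊆ Ω) (hfin : (spectrum ℂ A).Finite)
    (f : ℂ → ℂ) (hf : DifferentiableOn ℂ f Ω)
    (hnc : ¬ ∃ c : ℂ, ∀ z ∈ Ω, f z = c)
    (ord : ℂ → ℕ)
    (hord : ∀ lam ∈ spectrum ℂ A,
      (∀ j < ord lam, iteratedDeriv j (deriv f) lam = 0) ∧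
        iteratedDeriv (ord lam) (deriv f) lam ≠ 0)
    (P : ℂ[X])
    (hP : ∀ lam ∈ spectrum ℂ A, ∀ j < (minpoly ℂ A).rootMultiplicity lam,
      (Polynomial.derivative^[j] P).eval lam = iteratedDeriv j f lam) :
    minpoly ℂ (aeval A P) =
      ∏ ν ∈ hfin.toFinset.image f,
        (X - C ν) ^
          sSup {q : ℕ | ∃ lam ∈ spectrum ℂ A, f lam = ν ∧
            q = ((minpoly ℂ A).rootMultiplicity lam - 1) / (ord lam + 1) + 1} := by
  classical
  haveI : Nonempty (Fin n) := ⟨⟨0, by omega⟩⟩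
  set M : ℂ[X] := minpoly ℂ A with hMdef
  set m : ℂ → ℕ := fun lam => M.rootMultiplicity lam with hmdef
  set k : ℂ → ℕ := fun lam => (m lam - 1) / (ord lam + 1) + 1 with hkdef
  set S : ℂ → Set ℕ := fun ν =>
    {q : ℕ | ∃ lam ∈ spectrum ℂ A, f lam = ν ∧ q = k lam} with hSdef
  have hAint : IsIntegral ℂ A := Algebra.IsIntegral.isIntegral A
  have hMmonic : M.Monic := minpoly.monic hAint
  have hM0 : M ≠ 0 := hMmonic.ne_zero
  -- spectrum ↔ roots of minpoly
  have hroot : ∀ μ : ℂ, μ ∈ spectrum ℂ A ↔ M.IsRoot μ := by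
    intro μ
    let e := Matrix.toLinAlgEquiv (Pi.basisFun ℂ (Fin n))
    rw [← AlgEquiv.spectrum_eq e A, ← Module.End.hasEigenvalue_iff_mem_spectrum,
      Module.End.hasEigenvalue_iff_isRoot, hMdef, minpoly.algEquiv_eq]
  have hm1 : ∀ lam ∈ spectrum ℂ A, 1 ≤ m lam := fun lam hl =>
    (rootMultiplicity_pos hM0).2 ((hroot lam).1 hl)
  have hfeval : ∀ lam ∈ spectrum ℂ A, P.eval lam = f lam := by
    intro lam hl
    simpa using hP lam hl 0 (hm1 lam hl)
  have hjet : ∀ lam ∈ spectrum ℂ A, ∀ j, j + 2 ≤ m lam →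
      (derivative^[j + 1] P).eval lam = iteratedDeriv j (deriv f) lam := by
    intro lam hl j hj
    have hj' : j + 2 ≤ rootMultiplicity lam M := hj
    have h := hP lam hl (j + 1) (by omega)
    rwa [iteratedDeriv_succ'] at h
  -- spectrum nonempty
  have hne : (spectrum ℂ A).Nonempty := by
    have hnd : M.natDegree ≠ 0 := (minpoly.natDegree_pos hAint).ne'
    obtain ⟨μ, hμ⟩ := IsAlgClosed.exists_root M
      (fun h => hnd (natDegree_eq_zero_iff_degree_le_zero.2 (le_of_eq h)))
    exact ⟨μ, (hroot μ).2 hμ⟩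
  -- finiteness / boundedness of the exponent sets
  have hSsub : ∀ ν : ℂ, S ν ⊆ k '' (spectrum ℂ A) := by
    rintro ν q ⟨lam, hl, -, hq⟩
    exact ⟨lam, hl, hq.symm⟩
  have hSbdd : ∀ ν : ℂ, BddAbove (S ν) := fun ν =>
    ((hfin.image k).subset (hSsub ν)).bddAbove
  have hSne : ∀ ν ∈ hfin.toFinset.image f, (S ν).Nonempty := by
    intro ν hν
    obtain ⟨lam, hl, hfl⟩ := Finset.mem_image.1 hν
    exact ⟨k lam, lam, hfin.mem_toFinset.1 hl, hfl, rfl⟩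
  -- minpoly factorization
  have hspecFin : hfin.toFinset = M.roots.toFinset := by
    ext μ
    simp [hroot μ, mem_roots hM0]
  have hMfact : M = ∏ lam ∈ hfin.toFinset, (X - C lam) ^ m lam := by
    conv_lhs => rw [(IsAlgClosed.splits M).eq_prod_roots_of_monic hMmonic]
    rw [Finset.prod_multiset_map_count, hspecFin]
    exact Finset.prod_congr rfl fun lam _ => by rw [count_roots]
  have hMdvd_of : ∀ g : ℂ[X], (∀ lam ∈ spectrum ℂ A, (X - C lam) ^ m lam ∣ g) → M ∣ g := by
    intro g hg
    rw [hMfact]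
    exact prod_pow_dvd_aux _ _ _ fun lam hl => hg lam (hfin.mem_toFinset.1 hl)
  have hfacM : ∀ lam, (X - C lam) ^ m lam ∣ M := fun lam => pow_rootMultiplicity_dvd M lam
  by_cases hPc : P.natDegree = 0
  · -- constant case
    obtain ⟨c, rfl⟩ := natDegree_eq_zero.1 hPc
    have hfc : ∀ lam ∈ spectrum ℂ A, f lam = c := by
      intro lam hl
      have := hfeval lam hl
      rw [eval_C] at this
      exact this.symm
    have himg : hfin.toFinset.image f = {c} := by
      ext ν
      simp only [Finset.mem_image, Set.Finite.mem_toFinset, Finset.mem_singleton]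
      constructor
      · rintro ⟨lam, hl, rfl⟩
        exact hfc lam hl
      · rintro rfl
        obtain ⟨lam, hl⟩ := hne
        exact ⟨lam, hl, hfc lam hl⟩
    have hordc : ∀ lam ∈ spectrum ℂ A, m lam - 1 < ord lam + 1 := by
      intro lam hl
      by_contra hlt
      push_neg at hlt
      have h := hjet lam hl (ord lam) (by have := hm1 lam hl; omega)
      rw [iterate_derivative_C (Nat.succ_pos _), eval_zero] at h
      exact (hord lam hl).2 h.symm
    have hsup : sSup (S c) = 1 := by
      refine le_antisymm (csSup_le (hSne c (by simp [himg])) ?_) ?_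
      · rintro q ⟨lam, hl, -, rfl⟩
        simp [hkdef, Nat.div_eq_of_lt (hordc lam hl)]
      · obtain ⟨lam, hl⟩ := hne
        refine le_csSup (hSbdd c) ⟨lam, hl, hfc lam hl, ?_⟩
        simp [hkdef, Nat.div_eq_of_lt (hordc lam hl)]
    have hBval : aeval A (C c) = algebraMap ℂ (Matrix (Fin n) (Fin n) ℂ) c := aeval_C _ _
    rw [hBval, minpoly.eq_X_sub_C, himg, Finset.prod_singleton, hsup, pow_one]
  · -- nonconstant case
    have hg0 : ∀ lam : ℂ, P - C (P.eval lam) ≠ 0 := by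
      intro lam h0
      rw [sub_eq_zero] at h0
      exact hPc (by rw [h0]; exact natDegree_C _)
    set s : ℂ → ℕ := fun lam => (P - C (P.eval lam)).rootMultiplicity lam with hsdef
    have hcompne : ∀ q : ℂ[X], q ≠ 0 → q.comp P ≠ 0 := by
      intro q hq h0
      rcases comp_eq_zero_iff.1 h0 with h | ⟨-, h⟩
      · exact hq h
      · exact hPc (by rw [h]; exact natDegree_C _)
    -- iterated-derivative facts about P - C (P.eval lam)
    have hit : ∀ (lam : ℂ) (i : ℕ),
        derivative^[i + 1] (P - C (P.eval lam)) = derivative^[i + 1] P := by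
      intro lam i
      rw [Function.iterate_succ_apply, Function.iterate_succ_apply,
        derivative_sub, derivative_C, sub_zero]
    -- the key multiplicity computation
    have hs : ∀ lam ∈ spectrum ℂ A, m lam ≤ k lam * s lam ∧ (k lam - 1) * s lam < m lam := by
      intro lam hl
      have h1 := hm1 lam hl
      by_cases hc : m lam - 1 < ord lam + 1
      · have hk : k lam = 1 := by simp [hkdef, Nat.div_eq_of_lt hc]
        have hs1 : m lam - 1 < s lam := by
          apply lt_rootMultiplicity_of_isRoot_iterate_derivative (hg0 lam)
          intro j hj
          rcases j with - | i
          · simp [IsRoot]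
          · rw [hit lam i, IsRoot, hjet lam hl i (by omega)]
            exact (hord lam hl).1 i (by omega)
        constructor
        · rw [hk]; omega
        · rw [hk]; omega
      · push_neg at hc
        have hslo : ord lam < s lam := by
          apply lt_rootMultiplicity_of_isRoot_iterate_derivative (hg0 lam)
          intro j hj
          rcases j with - | i
          · simp [IsRoot]
          · rw [hit lam i, IsRoot, hjet lam hl i (by omega)]
            exact (hord lam hl).1 i (by omega)
        have hshi : s lam ≤ ord lam + 1 := by
          by_contra hlt
          push_neg at hlt
          have hroot2 := isRoot_iterate_derivative_of_lt_rootMultiplicity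
            (p := P - C (P.eval lam)) (t := lam) (n := ord lam + 1) hlt
          rw [hit lam (ord lam), IsRoot, hjet lam hl (ord lam) (by omega)] at hroot2
          exact (hord lam hl).2 hroot2
        have hseq : s lam = ord lam + 1 := le_antisymm hshi hslo
        have hdiv : m lam - 1 < ((m lam - 1) / (ord lam + 1) + 1) * (ord lam + 1) :=
          (Nat.div_lt_iff_lt_mul (Nat.succ_pos _)).1 (Nat.lt_succ_self _)
        have hdiv2 : (m lam - 1) / (ord lam + 1) * (ord lam + 1) ≤ m lam - 1 :=
          Nat.div_mul_le_self _ _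
        constructor
        · show m lam ≤ ((m lam - 1) / (ord lam + 1) + 1) * s lam
          rw [hseq]; omega
        · show ((m lam - 1) / (ord lam + 1) + 1 - 1) * s lam < m lam
          rw [Nat.add_sub_cancel, hseq]; omega
    -- set up B, N, Q
    set B := aeval A P with hBdef
    have hBint : IsIntegral ℂ B := Algebra.IsIntegral.isIntegral B
    set N : ℂ[X] := minpoly ℂ B with hNdef
    have hNmonic : N.Monic := minpoly.monic hBint
    have hN0 : N ≠ 0 := hNmonic.ne_zero
    set kk : ℂ → ℕ := fun ν => sSup (S ν) with hkkdef
    set Q : ℂ[X] := ∏ ν ∈ hfin.toFinset.image f, (X - C ν) ^ kk ν with hQdef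
    have hQmonic : Q.Monic :=
      monic_prod_of_monic _ _ fun ν _ => (monic_X_sub_C ν).pow _
    have hQcomp : Q.comp P = ∏ ν ∈ hfin.toFinset.image f, (P - C ν) ^ kk ν := by
      rw [hQdef, prod_comp]
      exact Finset.prod_congr rfl fun ν _ => by rw [pow_comp, sub_comp, X_comp, C_comp]
    have hkle : ∀ lam ∈ spectrum ℂ A, k lam ≤ kk (f lam) := by
      intro lam hl
      exact le_csSup (hSbdd (f lam)) ⟨lam, hl, rfl, rfl⟩
    -- N ∣ Q
    have hNQ : N ∣ Q := by
      apply minpoly.dvd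
      show aeval (aeval A P) Q = 0
      rw [← aeval_comp]
      have : M ∣ Q.comp P := by
        apply hMdvd_of
        intro lam hl
        have hmem : f lam ∈ hfin.toFinset.image f :=
          Finset.mem_image_of_mem f (hfin.mem_toFinset.2 hl)
        have hd1 : (X - C lam) ^ s lam ∣ P - C (f lam) := by
          rw [← hfeval lam hl]
          exact pow_rootMultiplicity_dvd _ _
        have hd2 : (X - C lam) ^ (kk (f lam) * s lam) ∣ (P - C (f lam)) ^ kk (f lam) := by
          rw [mul_comm, pow_mul]
          exact pow_dvd_pow_of_dvd hd1 _
        have hd3 : (P - C (f lam)) ^ kk (f lam) ∣ Q.comp P := by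
          rw [hQcomp]
          exact Finset.dvd_prod_of_mem _ hmem
        refine dvd_trans (dvd_trans (pow_dvd_pow _ ?_) hd2) hd3
        calc m lam ≤ k lam * s lam := (hs lam hl).1
          _ ≤ kk (f lam) * s lam := Nat.mul_le_mul_right _ (hkle lam hl)
      obtain ⟨u, hu⟩ := this
      rw [hu, map_mul]
      have hM0' : aeval A M = 0 := minpoly.aeval ℂ A
      rw [hM0', zero_mul]
    -- Q ∣ N
    have hMN : M ∣ N.comp P := by
      apply minpoly.dvd
      rw [aeval_comp]
      exact minpoly.aeval ℂ B
    have hQN : Q ∣ N := by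
      rw [hQdef]
      apply prod_pow_dvd_aux
      intro ν hν
      obtain ⟨lam0, hl0, hfl0, hkk0⟩ := Nat.sSup_mem (hSne ν hν) (hSbdd ν)
      have hPl0 : P.eval lam0 = ν := by rw [hfeval lam0 hl0, hfl0]
      have hcomp0 : N.comp P ≠ 0 := hcompne N hN0
      have hml : m lam0 ≤ (N.comp P).rootMultiplicity lam0 :=
        (le_rootMultiplicity_iff hcomp0).2 (dvd_trans (hfacM lam0) hMN)
      have hmc : (N.comp P).rootMultiplicity lam0
          = N.rootMultiplicity ν * s lam0 := by
        rw [rootMult_comp_aux N P hN0 hPc lam0]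
        show N.rootMultiplicity (eval lam0 P) * s lam0 = N.rootMultiplicity ν * s lam0
        rw [hPl0]
      have hge : kk ν ≤ N.rootMultiplicity ν := by
        by_contra hlt
        push_neg at hlt
        have hkk0' : kk ν = k lam0 := hkk0
        have h2 : N.rootMultiplicity ν ≤ k lam0 - 1 := by omega
        have h3 : N.rootMultiplicity ν * s lam0 ≤ (k lam0 - 1) * s lam0 :=
          Nat.mul_le_mul_right _ h2
        have := (hs lam0 hl0).2
        omega
      exact dvd_trans (pow_dvd_pow _ hge) (pow_rootMultiplicity_dvd N ν)
    exact eq_of_monic_of_associated hNmonic hQmonic (associated_of_dvd_dvd hNQ hQN)
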